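/- For every natural number n ≥ 1, min{2⌈√n⌉ + 2, 2⌈(1+√(1+4n))/2⌉ + 1} = min{ i + j : i, j ∈ ℕ, i ≥ 2, j ≥ 2, (i−1)(j−1) ≥ n }. -/
import Mathlib

set_option maxHeartbeats 1000000

/-- `c = ⌈√n⌉` satisfies `n ≤ c²`. -/
lemma aux_c_sq (n : ℕ) : n ≤ ⌈Real.sqrt n⌉₊ * ⌈Real.sqrt n⌉₊ := by
  set c := ⌈Real.sqrt n⌉₊ with hc
  have h1 : Real.sqrt n ≤ c := Nat.le_ceil _
  have h0 : (0:ℝ) ≤ Real.sqrt n := Real.sqrt_nonneg _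
  have h2 : (n:ℝ) ≤ (c:ℝ) * c := by
    have := Real.sq_sqrt (by positivity : (0:ℝ) ≤ (n:ℝ))
    nlinarith
  exact_mod_cast h2

/-- `c = ⌈√n⌉` is least with `n ≤ t²`. -/
lemma aux_c_min (n t : ℕ) (h : n ≤ t * t) : ⌈Real.sqrt n⌉₊ ≤ t := by
  apply Nat.ceil_le.mpr
  have : (n:ℝ) ≤ (t:ℝ) * t := by exact_mod_cast h
  have := Real.sqrt_le_sqrt this
  rwa [show (t:ℝ) * t = (t:ℝ)^2 by ring, Real.sqrt_sq (by positivity)] at this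

/-- `d = ⌈(1+√(1+4n))/2⌉` satisfies `n + d ≤ d²` (i.e. `n ≤ d(d-1)`). -/
lemma aux_d_sq (n : ℕ) : n + ⌈(1 + Real.sqrt (1 + 4 * n)) / 2⌉₊ ≤
    ⌈(1 + Real.sqrt (1 + 4 * n)) / 2⌉₊ * ⌈(1 + Real.sqrt (1 + 4 * n)) / 2⌉₊ := by
  set d := ⌈(1 + Real.sqrt (1 + 4 * n)) / 2⌉₊ with hd
  have h1 : (1 + Real.sqrt (1 + 4 * n)) / 2 ≤ d := Nat.le_ceil _
  have h0 : (0:ℝ) ≤ Real.sqrt (1 + 4 * n) := Real.sqrt_nonneg _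
  have hs : Real.sqrt (1 + 4 * n) * Real.sqrt (1 + 4 * n) = 1 + 4 * n :=
    Real.mul_self_sqrt (by positivity)
  have h2 : (n:ℝ) + d ≤ (d:ℝ) * d := by nlinarith
  exact_mod_cast h2

/-- `d` is least with `n ≤ t(t-1)` (stated as `n + t ≤ t²`), for `n ≥ 1`. -/
lemma aux_d_min (n t : ℕ) (hn : 1 ≤ n) (h : n + t ≤ t * t) :
    ⌈(1 + Real.sqrt (1 + 4 * n)) / 2⌉₊ ≤ t := by
  apply Nat.ceil_le.mpr
  have ht1 : 1 ≤ t := by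
    rcases Nat.eq_zero_or_pos t with rfl | ht1
    · simp at h; omega
    · exact ht1
  have h' : (n:ℝ) + t ≤ (t:ℝ) * t := by exact_mod_cast h
  have ht1' : (1:ℝ) ≤ t := by exact_mod_cast ht1
  have hsq : Real.sqrt (1 + 4 * n) ≤ 2 * t - 1 := by
    rw [show (2*(t:ℝ)-1) = Real.sqrt ((2*t-1)^2) from
      (Real.sqrt_sq (by linarith)).symm]
    apply Real.sqrt_le_sqrt
    nlinarith
  linarith

theorem minimal_model_wedge_circles_cardinality (n : ℕ) (hn : 1 ≤ n) :
    min (2 * ⌈Real.sqrt n⌉₊ + 2) (2 * ⌈(1 + Real.sqrt (1 + 4 * n)) / 2⌉₊ + 1) =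
      sInf {m : ℕ | ∃ i j : ℕ, 2 ≤ i ∧ 2 ≤ j ∧ n ≤ (i - 1) * (j - 1) ∧ m = i + j} := by
  set c := ⌈Real.sqrt n⌉₊ with hcdef
  set d := ⌈(1 + Real.sqrt (1 + 4 * n)) / 2⌉₊ with hddef
  have hc1 : n ≤ c * c := aux_c_sq n
  have hc2 : ∀ t, n ≤ t * t → c ≤ t := fun t => aux_c_min n t
  have hd1 : n + d ≤ d * d := aux_d_sq n
  have hd2 : ∀ t, n + t ≤ t * t → d ≤ t := fun t => aux_d_min n t hn
  have hcge : 1 ≤ c := by nlinarith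
  have hdge : 2 ≤ d := by nlinarith
  set S := {m : ℕ | ∃ i j : ℕ, 2 ≤ i ∧ 2 ≤ j ∧ n ≤ (i - 1) * (j - 1) ∧ m = i + j}
    with hS
  -- membership of both candidates
  have hmem1 : 2 * c + 2 ∈ S := by
    refine ⟨c + 1, c + 1, by omega, by omega, ?_, by ring⟩
    simpa using hc1
  have hmem2 : 2 * d + 1 ∈ S := by
    refine ⟨d + 1, d, by omega, hdge, ?_, by ring⟩
    obtain ⟨e, he⟩ : ∃ e, d = e + 1 := ⟨d - 1, by omega⟩
    rw [he] at hd1 ⊢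
    simp only [Nat.add_sub_cancel]
    nlinarith
  have hminmem : min (2 * c + 2) (2 * d + 1) ∈ S := by
    rcases min_choice (2 * c + 2) (2 * d + 1) with h | h <;> rw [h]
    · exact hmem1
    · exact hmem2
  -- lower bound
  have hlb : ∀ m ∈ S, min (2 * c + 2) (2 * d + 1) ≤ m := by
    rintro m ⟨i, j, hi, hj, hab, rfl⟩
    set a := i - 1 with ha
    set b := j - 1 with hb
    have ha1 : 1 ≤ a := by omega
    have hb1 : 1 ≤ b := by omega
    have hij : i + j = a + b + 2 := by omega
    rw [hij]
    rcases Nat.even_or_odd (a + b) with ⟨t, ht⟩ | ⟨t, ht⟩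
    · -- even case: a + b = 2t, n ≤ ab ≤ t²
      have h4 : 4 * (a * b) ≤ (a + b) * (a + b) := by
        have : (4:ℤ) * ((a:ℤ) * b) ≤ ((a:ℤ) + b) * ((a:ℤ) + b) := by
          nlinarith [sq_nonneg ((a:ℤ) - b)]
        exact_mod_cast this
      have hnt : n ≤ t * t := by nlinarith
      have := hc2 t hnt
      calc min (2 * c + 2) (2 * d + 1) ≤ 2 * c + 2 := min_le_left _ _
        _ ≤ a + b + 2 := by omega
    · -- odd case: a + b = 2t + 1, a ≠ b, n ≤ ab ≤ t(t+1)
      have hane : a ≠ b := by omega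
      have h4 : 4 * (a * b) + 1 ≤ (a + b) * (a + b) := by
        have hne : ((a:ℤ) - b) ≠ 0 := by
          intro hz; apply hane; omega
        have h1 : 1 ≤ ((a:ℤ) - b)^2 := by
          have : (0:ℤ) < ((a:ℤ) - b)^2 := by positivity
          nlinarith
        have : (4:ℤ) * ((a:ℤ) * b) + 1 ≤ ((a:ℤ) + b) * ((a:ℤ) + b) := by nlinarith
        exact_mod_cast this
      have hnt : n + (t + 1) ≤ (t + 1) * (t + 1) := by nlinarith
      have := hd2 (t + 1) hnt
      calc min (2 * c + 2) (2 * d + 1) ≤ 2 * d + 1 := min_le_right _ _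
        _ ≤ a + b + 2 := by omega
  refine le_antisymm ?_ (Nat.sInf_le hminmem)
  have hne : S.Nonempty := ⟨_, hmem1⟩
  exact hlb _ (Nat.sInf_mem hne)
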